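/- Let U, V : 𝒳 → 𝒴 be isometries between finite-dimensional complex Hilbert spaces with Tr(U*V) = 0, such that αU + βV is a scalar multiple of an isometry for all α, β ∈ ℂ. Then U*V = 0. -/

import Mathlib

open Matrix Kronecker BigOperators ComplexOrder

noncomputable section

/-- The positive semidefinite square root, as defined in the older Mathlib
(`Matrix.PosSemidef.sqrt`, removed since). -/
noncomputable def Matrix.PosSemidef.sqrt {n 𝕜 : Type*} [Fintype n] [DecidableEq n] [RCLike 𝕜]
    {A : Matrix n n 𝕜} (hA : A.PosSemidef) : Matrix n n 𝕜 :=
  hA.1.eigenvectorUnitary.1 * diagonal ((↑) ∘ (√·) ∘ hA.1.eigenvalues) *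
  (star hA.1.eigenvectorUnitary : Matrix n n 𝕜)

/-- Trace norm (sum of singular values) of a complex matrix. -/
noncomputable def traceNorm {l m : Type*} [Fintype l] [Fintype m] [DecidableEq m]
    (A : Matrix l m ℂ) : ℝ :=
  ((Matrix.posSemidef_conjTranspose_mul_self A).sqrt.trace).re

/-- Frobenius norm. -/
noncomputable def frobNorm {l m : Type*} [Fintype l] [Fintype m]
    (A : Matrix l m ℂ) : ℝ :=
  Real.sqrt ((Aᴴ * A).trace.re)

/-- Partial transpose on the first tensor factor. -/
def ptranspose {a b : Type*} (X : Matrix (a × b) (a × b) ℂ) : Matrix (a × b) (a × b) ℂ :=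
  Matrix.of fun p q => X (q.1, p.2) (p.1, q.2)

/-- Outer product `u v*`. -/
def outer {a : Type*} (u v : a → ℂ) : Matrix a a ℂ :=
  Matrix.of fun p q => u p * star (v q)

/-- Density operator: positive semidefinite with trace one. -/
def IsDensity {a : Type*} [Fintype a] (ρ : Matrix a a ℂ) : Prop :=
  ρ.PosSemidef ∧ ρ.trace = 1

/-- Maximally entangled unit vector in `ℂⁿ ⊗ ℂᵐ`. -/
def MaxEntangled (n m : ℕ) (u : Fin n × Fin m → ℂ) : Prop :=
  ∃ (x : Fin (min n m) → EuclideanSpace ℂ (Fin n))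
    (y : Fin (min n m) → EuclideanSpace ℂ (Fin m)),
    Orthonormal ℂ x ∧ Orthonormal ℂ y ∧
      ∀ p : Fin n × Fin m,
        u p = (1 / Real.sqrt (min n m) : ℝ) * ∑ i, x i p.1 * y i p.2

/-- Extension `Φ ⊗ I` of a matrix map to a system with ancilla `c`. -/
def tensorExt {a b c : Type*} [Fintype a] [DecidableEq a] [Fintype c]
    (Φ : Matrix a a ℂ →ₗ[ℂ] Matrix b b ℂ)
    (X : Matrix (a × c) (a × c) ℂ) : Matrix (b × c) (b × c) ℂ :=
  Matrix.of fun p q => Φ (Matrix.of fun i j => X (i, p.2) (j, q.2)) p.1 q.1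

/-- Quantum channel: completely positive and trace preserving. -/
def IsChannel {a b : Type*} [Fintype a] [DecidableEq a] [Fintype b]
    (Φ : Matrix a a ℂ →ₗ[ℂ] Matrix b b ℂ) : Prop :=
  (∀ X, (Φ X).trace = X.trace) ∧
    ∀ (k : ℕ) (X : Matrix (a × Fin k) (a × Fin k) ℂ),
      X.PosSemidef → (tensorExt Φ X).PosSemidef

/-- Partial trace over the second tensor factor. -/
def ptraceRight {a b : Type*} [Fintype b] (M : Matrix (a × b) (a × b) ℂ) :
    Matrix a a ℂ :=
  Matrix.of fun i k => ∑ c, M (i, c) (k, c)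

/-- Partial trace over the first tensor factor. -/
def ptraceLeft {a b : Type*} [Fintype a] (M : Matrix (a × b) (a × b) ℂ) :
    Matrix b b ℂ :=
  Matrix.of fun i k => ∑ c, M (c, i) (c, k)

/-- Canonical maximally entangled state `τ = (1/d) vec(I)vec(I)*` on `a ⊗ a`. -/
noncomputable def tauGen {a : Type*} [Fintype a] [DecidableEq a] :
    Matrix (a × a) (a × a) ℂ :=
  Matrix.of fun p q =>
    (Fintype.card a : ℂ)⁻¹ * (if p.1 = p.2 then 1 else 0) * (if q.1 = q.2 then 1 else 0)

/-- The operator `τ ⊗ σ` on `a ⊗ (a ⊗ r)`. -/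
noncomputable def tauSigma {a r : Type*} [Fintype a] [DecidableEq a]
    (σ : Matrix r r ℂ) : Matrix (a × (a × r)) (a × (a × r)) ℂ :=
  Matrix.of fun p q => tauGen (p.1, p.2.1) (q.1, q.2.1) * σ p.2.2 q.2.2

/-- Fidelity of two positive semidefinite matrices. -/
noncomputable def fidelity {a : Type*} [Fintype a] [DecidableEq a]
    {P Q : Matrix a a ℂ} (hP : P.PosSemidef) (hQ : Q.PosSemidef) : ℝ :=
  traceNorm (hP.sqrt * hQ.sqrt)
/-- If `U, V` are Hilbert–Schmidt-orthogonal isometries such that every complex linear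
combination `αU + βV` is a scalar multiple of an isometry, then `U*V = 0`. -/
theorem stmt9 (n m : ℕ) (U V : Matrix (Fin m) (Fin n) ℂ)
    (hU : Uᴴ * U = 1) (hV : Vᴴ * V = 1) (horth : (Uᴴ * V).trace = 0)
    (h : ∀ α β : ℂ, ∃ c : ℝ, 0 ≤ c ∧
      ((α • U + β • V)ᴴ * (α • U + β • V)) = (c : ℂ) • (1 : Matrix (Fin n) (Fin n) ℂ)) :
    Uᴴ * V = 0 := by
  rcases Nat.eq_zero_or_pos n with hn | hn
  · subst hn
    ext i j
    exact i.elim0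
  -- Expand the hypothesis for general α β
  have expand : ∀ α β : ℂ, ((α • U + β • V)ᴴ * (α • U + β • V)) =
      (star α * α) • (1 : Matrix (Fin n) (Fin n) ℂ) + (star β * β) • 1
        + (star α * β) • (Uᴴ * V) + (star β * α) • (Vᴴ * U) := by
    intro α β
    simp only [Matrix.conjTranspose_add, Matrix.conjTranspose_smul, Matrix.add_mul,
      Matrix.mul_add, Matrix.smul_mul, Matrix.mul_smul, hU, hV, smul_smul, smul_add]
    module
  obtain ⟨c1, _, h1⟩ := h 1 1
  obtain ⟨c2, _, h2⟩ := h 1 Complex.I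
  rw [expand] at h1 h2
  simp only [star_one, one_mul, mul_one, one_smul, Complex.star_def, Complex.conj_I,
    neg_mul, neg_smul, mul_neg] at h1 h2
  have hII : Complex.I * Complex.I = -1 := Complex.I_mul_I
  rw [hII] at h2
  -- h1 : 1 + 1 + UᴴV + VᴴU = c1 • 1
  -- h2 : 1 + (-(-1))•1 + I•UᴴV + (-(I))•VᴴU = c2 • 1 roughly
  have e1 : Uᴴ * V + Vᴴ * U = ((c1 : ℂ) - 2) • 1 := by
    have := h1
    rw [sub_smul]
    have : (1 : Matrix (Fin n) (Fin n) ℂ) + 1 + (Uᴴ * V + Vᴴ * U) = (c1 : ℂ) • 1 := by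
      rw [← h1]; abel
    have h2' := congrArg (fun X => X - ((1 : Matrix (Fin n) (Fin n) ℂ) + 1)) this
    simp only [add_sub_cancel_left] at h2'
    rw [h2']
    have : ((2 : ℂ)) • (1 : Matrix (Fin n) (Fin n) ℂ) = 1 + 1 := by
      rw [two_smul]
    rw [this]
  have e2 : Complex.I • (Uᴴ * V) - Complex.I • (Vᴴ * U) = ((c2 : ℂ) - 2) • 1 := by
    have key : (1 : Matrix (Fin n) (Fin n) ℂ) + 1
        + (Complex.I • (Uᴴ * V) - Complex.I • (Vᴴ * U)) = (c2 : ℂ) • 1 := by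
      rw [← h2]
      simp only [neg_neg, one_smul, neg_smul]
      abel
    have h2' := congrArg (fun X => X - ((1 : Matrix (Fin n) (Fin n) ℂ) + 1)) key
    simp only [add_sub_cancel_left] at h2'
    rw [h2', sub_smul]
    have : ((2 : ℂ)) • (1 : Matrix (Fin n) (Fin n) ℂ) = 1 + 1 := two_smul _ _
    rw [this]
  -- Combine: 2 • (UᴴV) = ((c1-2) - I*(c2-2)) • 1
  have e2' : Uᴴ * V - Vᴴ * U = (-Complex.I * ((c2 : ℂ) - 2)) • 1 := by
    have := congrArg (fun X => (-Complex.I) • X) e2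
    simp only [smul_sub, smul_smul, neg_mul, Complex.I_mul_I, neg_neg, one_smul] at this
    rw [this]
    rw [neg_mul, neg_smul, ← smul_smul]
  have key : (2 : ℂ) • (Uᴴ * V) = (((c1 : ℂ) - 2) + (-Complex.I * ((c2 : ℂ) - 2))) • 1 := by
    rw [add_smul, ← e1, ← e2', two_smul]
    abel
  set s : ℂ := (((c1 : ℂ) - 2) + (-Complex.I * ((c2 : ℂ) - 2))) / 2 with hs
  have hM : Uᴴ * V = s • 1 := by
    have h2ne : (2 : ℂ) ≠ 0 := two_ne_zero
    have := congrArg (fun X => ((2 : ℂ))⁻¹ • X) key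
    simp only [smul_smul, inv_mul_cancel₀ h2ne, one_smul] at this
    rw [this, hs]
    congr 1
    field_simp
  -- Trace gives s * n = 0, so s = 0
  have htr : s * n = 0 := by
    have := horth
    rw [hM, Matrix.trace_smul, Matrix.trace_one] at this
    simpa [Finset.card_univ, smul_eq_mul] using this
  have hsz : s = 0 := by
    rcases mul_eq_zero.mp htr with h | h
    · exact h
    · exfalso
      exact hn.ne' (by exact_mod_cast h)
  rw [hM, hsz, zero_smul]
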